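/- If a simple graph G is chordal, then for any positive integers s_1,...,s_n, the expansion graph G^{(s_1,...,s_n)} is chordal. -/

import Mathlib

/-- A simple graph is chordal if it has no induced cycle of length ≥ 4:
every (injectively embedded) cycle of length `m ≥ 4` has a chord, i.e. an edge
between two non-consecutive vertices of the cycle. -/
def SimpleGraph.IsChordal {V : Type*} (G : SimpleGraph V) : Prop :=
  ∀ (m : ℕ), 4 ≤ m → ∀ f : ZMod m → V, Function.Injective f →
    (∀ k, G.Adj (f k) (f (k + 1))) →
    ∃ k l : ZMod m, k ≠ l ∧ l ≠ k + 1 ∧ k ≠ l + 1 ∧ G.Adj (f k) (f l)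

/-- The `(s 0, …, s (n-1))`-expansion of a graph on `{x_0, …, x_(n-1)}`:
the vertices are the copies `x_{ij} = (i, j)` with `j < s i`; two copies of
the same vertex are adjacent, and copies of distinct vertices are adjacent iff
the original vertices are. -/
def SimpleGraph.expansion {n : ℕ} (G : SimpleGraph (Fin n)) (s : Fin n → ℕ) :
    SimpleGraph {p : Fin n × ℕ // p.2 < s p.1} where
  Adj a b := G.Adj a.1.1 b.1.1 ∨ (a.1.1 = b.1.1 ∧ a ≠ b)
  symm := by
    constructor
    rintro a b (h | ⟨h, hne⟩)
    · exact Or.inl h.symm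
    · exact Or.inr ⟨h.symm, fun e => hne e.symm⟩
  loopless := by
    constructor
    rintro a (h | ⟨_, hne⟩)
    · exact G.irrefl h
    · exact hne rfl

/-- if `G` is chordal then so is any expansion `G^{(s₁,…,sₙ)}`. -/
theorem SimpleGraph.IsChordal.expansion {n : ℕ} (G : SimpleGraph (Fin n))
    (s : Fin n → ℕ) (hs : ∀ i, 0 < s i) (hG : G.IsChordal) :
    (G.expansion s).IsChordal := by
  intro m hm f hfinj hfadj
  set g : ZMod m → Fin n := fun k => (f k).1.1 with hgdef
  have hcast : ∀ a : ℕ, 0 < a → a < m → (a : ZMod m) ≠ 0 := by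
    intro a h0 ha h
    rw [ZMod.natCast_eq_zero_iff] at h
    exact absurd (Nat.le_of_dvd h0 h) (by omega)
  have one_ne : (1 : ZMod m) ≠ 0 := by
    have := hcast 1 (by omega) (by omega); simpa using this
  have two_ne : (2 : ZMod m) ≠ 0 := by
    have := hcast 2 (by omega) (by omega); simpa using this
  have three_ne : (3 : ZMod m) ≠ 0 := by
    have := hcast 3 (by omega) (by omega); simpa using this
  by_cases h1 : ∃ k l : ZMod m, k ≠ l ∧ l ≠ k + 1 ∧ k ≠ l + 1 ∧ g k = g l
  · obtain ⟨k, l, hkl, ha2, ha3, heq⟩ := h1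
    exact ⟨k, l, hkl, ha2, ha3, Or.inr ⟨heq, fun e => hkl (hfinj e)⟩⟩
  push_neg at h1
  have h1' : ∀ k l, g k = g l → k = l ∨ l = k + 1 ∨ k = l + 1 := by
    intro k l h
    by_contra hc
    push_neg at hc
    exact h1 k l hc.1 hc.2.1 hc.2.2 h
  by_cases h2 : ∃ k, g k = g (k + 1)
  · obtain ⟨k, hk⟩ := h2
    refine ⟨k - 1, k + 1, ?_, ?_, ?_, ?_⟩
    · intro h; exact two_ne (by linear_combination -h)
    · intro h; exact one_ne (by linear_combination h)
    · intro h; exact three_ne (by linear_combination -h)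
    · have hadj := hfadj (k - 1)
      rw [sub_add_cancel] at hadj
      rcases hadj with ha | ⟨he, _⟩
      · have ha' : G.Adj (g (k - 1)) (g k) := ha
        rw [hk] at ha'
        exact Or.inl ha'
      · exfalso
        have he' : g (k - 1) = g k := he
        have hgg : g (k - 1) = g (k + 1) := by rw [he', hk]
        rcases h1' _ _ hgg with h | h | h
        all_goals first
          | exact one_ne (by linear_combination h)
          | exact one_ne (by linear_combination -h)
          | exact two_ne (by linear_combination h)
          | exact two_ne (by linear_combination -h)
          | exact three_ne (by linear_combination h)
          | exact three_ne (by linear_combination -h)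
  push_neg at h2
  have ginj : Function.Injective g := by
    intro k l h
    rcases h1' k l h with h' | h' | h'
    · exact h'
    · exfalso; rw [h'] at h; exact h2 k h
    · exfalso; rw [h'] at h; exact h2 l h.symm
  have gadj : ∀ k, G.Adj (g k) (g (k + 1)) := by
    intro k
    rcases hfadj k with ha | ⟨he, _⟩
    · exact ha
    · exact absurd he (h2 k)
  obtain ⟨k, l, a, b, c, hadj⟩ := hG m hm g ginj gadj
  exact ⟨k, l, a, b, c, Or.inl hadj⟩
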